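/- Let n ≥ 1, τ > 0, and κ(τ) = 1 − e^{−τ}. Define the operator S₀(τ) on Schwartz functions by [S₀(τ)f](x) = e^{−τ/2}(H_{κ(τ)} ∗ f)(e^{−τ/2}x), where H_t(x) = (4πt)^{−n/2} e^{−|x|²/(4t)}. Then for every s ≥ 0 and every Schwartz function f, ‖S₀(τ)f‖_{Ḣ^s(ℝⁿ)} ≤ e^{(1/2)(n/2 − 1 − s)τ} ‖f‖_{Ḣ^s(ℝⁿ)}. -/

import Mathlib

open MeasureTheory

noncomputable section

/-- The heat kernel H_t(x) = (4πt)^{−n/2} e^{−|x|²/(4t)}. -/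
def heatK (n : ℕ) (t : ℝ) (x : EuclideanSpace ℝ (Fin n)) : ℝ :=
  (4 * Real.pi * t) ^ (-(n : ℝ) / 2) * Real.exp (-‖x‖ ^ 2 / (4 * t))

/-- The free semigroup [S₀(τ)f](x) = e^{−τ/2}(H_{κ(τ)} ∗ f)(e^{−τ/2}x), κ(τ) = 1 − e^{−τ}. -/
def S0 (n : ℕ) (τ : ℝ) (f : EuclideanSpace ℝ (Fin n) → ℂ)
    (x : EuclideanSpace ℝ (Fin n)) : ℂ :=
  Real.exp (-τ / 2) * ∫ y : EuclideanSpace ℝ (Fin n),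
    ((heatK n (1 - Real.exp (-τ)) (Real.exp (-τ / 2) • x - y) : ℝ) : ℂ) * f y

/-- Ḣ^s norm. -/
def hnorm (n : ℕ) (s : ℝ) (f : EuclideanSpace ℝ (Fin n) → ℂ) : ℝ :=
  (∫ ξ : EuclideanSpace ℝ (Fin n),
    ‖ξ‖ ^ (2 * s) * ‖VectorFourier.fourierIntegral Real.fourierChar volume (innerₗ (EuclideanSpace ℝ (Fin n))) f ξ‖ ^ 2) ^ ((1 : ℝ) / 2)

end

open FourierTransform Real Complex
open scoped RealInnerProductSpace

private abbrev Eu (n : ℕ) := EuclideanSpace ℝ (Fin n)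

variable {n : ℕ}

private lemma fourier_const_mul (c : ℂ) (f : Eu n → ℂ) (ξ : Eu n) :
    𝓕 (fun x => c * f x) ξ = c * 𝓕 f ξ := by
  simp only [Real.fourier_eq, Circle.smul_def, smul_eq_mul]
  rw [← integral_const_mul]
  congr 1 with x
  ring

lemma fourier_comp_smul (R : ℝ) (hR : 0 < R) (f : Eu n → ℂ) (ξ : Eu n) :
    𝓕 (fun x => f (R • x)) ξ = ((R ^ n : ℝ)⁻¹ : ℂ) * 𝓕 f (R⁻¹ • ξ) := by
  have key : ∀ x : Eu n, 𝐞 (-⟪x, ξ⟫) • f (R • x)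
      = (fun u => 𝐞 (-⟪u, R⁻¹ • ξ⟫) • f u) (R • x) := by
    intro x
    simp only []
    congr 2
    rw [real_inner_smul_left, real_inner_smul_right, ← mul_assoc, mul_inv_cancel₀ hR.ne', one_mul]
  calc 𝓕 (fun x => f (R • x)) ξ
      = ∫ x : Eu n, (fun u => 𝐞 (-⟪u, R⁻¹ • ξ⟫) • f u) (R • x) := by
        rw [Real.fourier_eq]; exact integral_congr_ae (Filter.Eventually.of_forall key)
    _ = ((R ^ n : ℝ)⁻¹ : ℂ) * 𝓕 f (R⁻¹ • ξ) := by
        rw [Measure.integral_comp_smul_of_nonneg volume (fun u : Eu n => 𝐞 (-⟪u, R⁻¹ • ξ⟫) • f u) R (hR := hR.le), Real.fourier_eq]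
        simp [finrank_euclideanSpace, real_smul]

lemma fourier_conv (H f : Eu n → ℂ) (hH : Integrable H) (hf : Integrable f) (ξ : Eu n) :
    𝓕 (fun x => ∫ y, H (x - y) * f y) ξ = 𝓕 H ξ * 𝓕 f ξ := by
  have hc : ∀ x y : Eu n, (𝐞 (-⟪x + y, ξ⟫) : ℂ) = (𝐞 (-⟪x, ξ⟫) : ℂ) * (𝐞 (-⟪y, ξ⟫) : ℂ) := by
    intro x y
    rw [inner_add_left, neg_add, Real.fourierChar_apply, Real.fourierChar_apply,
      Real.fourierChar_apply, ← Complex.exp_add]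
    push_cast
    ring_nf
  have hint : Integrable (fun p : Eu n × Eu n =>
      (𝐞 (-⟪p.1, ξ⟫) : ℂ) * (H (p.1 - p.2) * f p.2)) (volume.prod volume) := by
    have base : Integrable (fun p : Eu n × Eu n => H (p.1 - p.2) * f p.2)
        (volume.prod volume) := by
      have := hf.convolution_integrand (ContinuousLinearMap.mul ℂ ℂ).flip hH
      simpa [mul_comm] using this
    apply base.bdd_mul (c := 1) ?_ (Filter.Eventually.of_forall fun p => (Circle.norm_coe _).le)
    apply Continuous.aestronglyMeasurable
    have : Continuous fun z : ℝ => ((𝐞 z : Circle) : ℂ) := by fun_prop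
    exact this.comp ((continuous_fst.inner continuous_const).neg)
  calc 𝓕 (fun x => ∫ y, H (x - y) * f y) ξ
      = ∫ x : Eu n, (𝐞 (-⟪x, ξ⟫) : ℂ) * ∫ y, H (x - y) * f y := by
        simp only [Real.fourier_eq, Circle.smul_def, smul_eq_mul]
    _ = ∫ x : Eu n, ∫ y, (𝐞 (-⟪x, ξ⟫) : ℂ) * (H (x - y) * f y) := by
        congr 1 with x; rw [integral_const_mul]
    _ = ∫ y : Eu n, ∫ x, (𝐞 (-⟪x, ξ⟫) : ℂ) * (H (x - y) * f y) := by
        exact integral_integral_swap hint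
    _ = ∫ y : Eu n, ∫ x, ((𝐞 (-⟪x, ξ⟫) : ℂ) * H x) * ((𝐞 (-⟪y, ξ⟫) : ℂ) * f y) := by
        congr 1 with y
        rw [← integral_add_right_eq_self (fun x : Eu n => (𝐞 (-⟪x, ξ⟫) : ℂ) * (H (x - y) * f y)) y]
        congr 1 with x
        simp only [add_sub_cancel_right, hc]
        ring
    _ = (∫ x : Eu n, (𝐞 (-⟪x, ξ⟫) : ℂ) * H x) * ∫ y, (𝐞 (-⟪y, ξ⟫) : ℂ) * f y := by
        rw [← integral_const_mul]
        congr 1 with y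
        rw [integral_mul_const]
    _ = 𝓕 H ξ * 𝓕 f ξ := by
        simp only [Real.fourier_eq, Circle.smul_def, smul_eq_mul]
private lemma heat_eq (t : ℝ) (ht : 0 < t) : (fun x : Eu n => ((heatK n t x : ℝ) : ℂ))
    = fun x : Eu n => (((4 * Real.pi * t) ^ (-(n : ℝ) / 2) : ℝ) : ℂ)
      * Complex.exp (-(((4 * t)⁻¹ : ℝ) : ℂ) * ‖x‖ ^ 2) := by
  ext x
  rw [heatK]
  push_cast
  congr 1
  congr 1
  have h4 : (4 * (t:ℂ)) ≠ 0 := by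
    simp only [ne_eq, mul_eq_zero, OfNat.ofNat_ne_zero, Complex.ofReal_eq_zero, false_or]
    exact_mod_cast ht.ne'
  field_simp

lemma heat_integrable (t : ℝ) (ht : 0 < t) :
    Integrable (fun x : Eu n => ((heatK n t x : ℝ) : ℂ)) := by
  rw [heat_eq t ht]
  apply Integrable.const_mul
  have hb : (0:ℝ) < ((((4 * t)⁻¹ : ℝ) : ℂ)).re := by
    simp; positivity
  simpa using GaussianFourier.integrable_cexp_neg_mul_sq_norm_add hb 0 (0 : Eu n)

lemma heat_fourier_bound (t : ℝ) (ht : 0 < t) (ξ : Eu n) :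
    ‖𝓕 (fun x : Eu n => ((heatK n t x : ℝ) : ℂ)) ξ‖ ≤ 1 := by
  rw [heat_eq t ht]
  rw [fourier_const_mul]
  have hb : (0:ℝ) < ((((4 * t)⁻¹ : ℝ) : ℂ)).re := by simp; positivity
  rw [fourier_gaussian_innerProductSpace hb]
  rw [norm_mul, norm_mul]
  have h4 : (0:ℝ) < 4 * Real.pi * t := by positivity
  have e1 : ‖((((4 * Real.pi * t) ^ (-(n : ℝ) / 2) : ℝ)) : ℂ)‖ = (4 * Real.pi * t) ^ (-(n : ℝ) / 2) := by
    rw [Complex.norm_real, Real.norm_eq_abs, abs_of_pos (Real.rpow_pos_of_pos h4 _)]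
  have e2 : ((Real.pi : ℂ) / (((4 * t)⁻¹ : ℝ) : ℂ)) = (((4 * Real.pi * t : ℝ)) : ℂ) := by
    push_cast
    field_simp
  have e3 : ‖((Real.pi : ℂ) / (((4 * t)⁻¹ : ℝ) : ℂ)) ^ ((Module.finrank ℝ (Eu n) : ℂ) / 2)‖
      = (4 * Real.pi * t) ^ ((n : ℝ) / 2) := by
    rw [e2, Complex.norm_cpow_eq_rpow_re_of_pos h4]
    norm_num [finrank_euclideanSpace]
  rw [e1, e3]
  have e4 : ‖Complex.exp (-(Real.pi:ℂ) ^ 2 * (‖ξ‖:ℂ) ^ 2 / (((4 * t)⁻¹ : ℝ) : ℂ))‖ ≤ 1 := by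
    have : (-(Real.pi:ℂ) ^ 2 * (‖ξ‖:ℂ) ^ 2 / (((4 * t)⁻¹ : ℝ) : ℂ))
        = ((-Real.pi ^ 2 * ‖ξ‖ ^ 2 * (4 * t) : ℝ) : ℂ) := by
      push_cast
      field_simp
    rw [this, Complex.norm_exp]
    simp only [Complex.ofReal_re]
    rw [Real.exp_le_one_iff]
    nlinarith [mul_nonneg (mul_nonneg (sq_nonneg Real.pi) (sq_nonneg ‖ξ‖)) ht.le]
  calc (4 * Real.pi * t) ^ (-(n : ℝ) / 2) * ((4 * Real.pi * t) ^ ((n : ℝ) / 2) * ‖_‖)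
      ≤ (4 * Real.pi * t) ^ (-(n : ℝ) / 2) * ((4 * Real.pi * t) ^ ((n : ℝ) / 2) * 1) := by
        apply mul_le_mul_of_nonneg_left _ (Real.rpow_nonneg h4.le _)
        exact mul_le_mul_of_nonneg_left e4 (Real.rpow_nonneg h4.le _)
    _ = 1 := by
        rw [mul_one, ← Real.rpow_add h4, neg_div, neg_add_cancel, Real.rpow_zero]

lemma schwartz_weight_integrable (s : ℝ) (hs : 0 ≤ s) (g : SchwartzMap (Eu n) ℂ) :
    Integrable (fun η : Eu n => ‖η‖ ^ (2 * s) * ‖g η‖ ^ 2) := by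
  set m := ⌈2 * s⌉₊ with hm
  set C := SchwartzMap.seminorm ℝ 0 0 g with hC
  have hCnn : 0 ≤ C := apply_nonneg _ _
  have hCb : ∀ x, ‖g x‖ ≤ C := fun x => g.norm_le_seminorm ℝ x
  have hmaj : Integrable (fun η : Eu n => C * (‖g η‖ + ‖η‖ ^ m * ‖g η‖)) := by
    apply Integrable.const_mul
    exact (g.integrable).norm.add (g.integrable_pow_mul volume m)
  apply hmaj.mono'
  · apply Continuous.aestronglyMeasurable
    apply Continuous.mul
    · exact continuous_norm.rpow_const (fun x => Or.inr (by positivity))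
    · exact (g.continuous.norm).pow 2
  · filter_upwards with η
    have h1 : ‖η‖ ^ (2 * s) ≤ 1 + ‖η‖ ^ m := by
      rcases le_or_gt ‖η‖ 1 with h | h
      · have := Real.rpow_le_one (norm_nonneg η) h (by positivity : (0:ℝ) ≤ 2*s)
        nlinarith [pow_nonneg (norm_nonneg η) m]
      · have h2 : ‖η‖ ^ (2 * s) ≤ ‖η‖ ^ (m : ℝ) :=
          Real.rpow_le_rpow_of_exponent_le h.le (Nat.le_ceil _)
        rw [Real.rpow_natCast] at h2
        linarith
    have h2 : ‖g η‖ ^ 2 ≤ C * ‖g η‖ := by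
      rw [pow_two]
      exact mul_le_mul_of_nonneg_right (hCb η) (norm_nonneg _)
    have h3 : 0 ≤ ‖η‖ ^ (2 * s) := Real.rpow_nonneg (norm_nonneg _) _
    rw [Real.norm_of_nonneg (by positivity)]
    calc ‖η‖ ^ (2 * s) * ‖g η‖ ^ 2 ≤ (1 + ‖η‖ ^ m) * (C * ‖g η‖) := by
          apply mul_le_mul h1 h2 (by positivity) (by positivity)
      _ = C * (‖g η‖ + ‖η‖ ^ m * ‖g η‖) := by ring

/-- Growth bound of the free semigroup on Ḣ^s. -/
theorem S0_growth_bound (n : ℕ) (hn : 1 ≤ n) (τ : ℝ) (hτ : 0 < τ) (s : ℝ) (hs : 0 ≤ s)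
    (f : SchwartzMap (EuclideanSpace ℝ (Fin n)) ℂ) :
    hnorm n s (S0 n τ f) ≤
      Real.exp ((1 / 2) * ((n : ℝ) / 2 - 1 - s) * τ) * hnorm n s f := by
  set R : ℝ := Real.exp (-τ / 2) with hRdef
  have hR : 0 < R := Real.exp_pos _
  set t : ℝ := 1 - Real.exp (-τ) with htdef
  have ht : 0 < t := by
    have : Real.exp (-τ) < 1 := Real.exp_lt_one_iff.mpr (by linarith)
    simp [htdef]; linarith
  set H : Eu n → ℂ := fun x => ((heatK n t x : ℝ) : ℂ) with hHdef
  set G0 : Eu n → ℂ := fun u => ∫ y, H (u - y) * f y with hG0def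
  have hS : S0 n τ ⇑f = fun x => ((R : ℝ) : ℂ) * G0 (R • x) := rfl
  -- the Fourier transform of S0 f
  have hF : ∀ ξ : Eu n, 𝓕 (S0 n τ ⇑f) ξ =
      ((R : ℝ) : ℂ) * (((R ^ n : ℝ)⁻¹ : ℂ) * (𝓕 H (R⁻¹ • ξ) * 𝓕 ⇑f (R⁻¹ • ξ))) := by
    intro ξ
    rw [show 𝓕 (S0 n τ ⇑f) ξ = 𝓕 (fun x => ((R:ℝ):ℂ) * G0 (R • x)) ξ by
      rw [hS]]
    rw [fourier_const_mul ((R:ℝ):ℂ) (fun x => G0 (R • x)) ξ,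
      fourier_comp_smul R hR G0 ξ,
      fourier_conv H ⇑f (heat_integrable t ht) f.integrable (R⁻¹ • ξ)]
  have hFnorm : ∀ ξ : Eu n, ‖𝓕 (S0 n τ ⇑f) ξ‖ ≤
      R * (R ^ n)⁻¹ * ‖𝓕 ⇑f (R⁻¹ • ξ)‖ := by
    intro ξ
    rw [hF ξ]
    rw [norm_mul, norm_mul, norm_mul]
    have h1 : ‖((R : ℝ) : ℂ)‖ = R := by
      rw [Complex.norm_real, Real.norm_eq_abs, abs_of_pos hR]
    have h2 : ‖(((R ^ n : ℝ) : ℂ))⁻¹‖ = (R ^ n)⁻¹ := by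
      rw [norm_inv, Complex.norm_real, Real.norm_eq_abs, abs_of_pos (by positivity)]
    rw [h1, h2]
    rw [mul_assoc]
    apply mul_le_mul_of_nonneg_left _ hR.le
    apply mul_le_mul_of_nonneg_left _ (by positivity)
    calc ‖𝓕 H (R⁻¹ • ξ)‖ * ‖𝓕 ⇑f (R⁻¹ • ξ)‖
        ≤ 1 * ‖𝓕 ⇑f (R⁻¹ • ξ)‖ :=
          mul_le_mul_of_nonneg_right (heat_fourier_bound t ht _) (norm_nonneg _)
      _ = ‖𝓕 ⇑f (R⁻¹ • ξ)‖ := one_mul _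
  -- integrability of the weighted Fourier side
  set gf : SchwartzMap (Eu n) ℂ := SchwartzMap.fourierTransformCLM ℝ f with hgf
  have hcoe : ⇑gf = 𝓕 ⇑f := rfl
  set Cst : ℝ := (R * (R ^ n)⁻¹) ^ 2 * R ^ (2 * s) with hCst
  have hCstnn : 0 ≤ Cst := by positivity
  have hGint : Integrable (fun η : Eu n => ‖η‖ ^ (2 * s) * ‖𝓕 ⇑f η‖ ^ 2) := by
    rw [← hcoe]; exact schwartz_weight_integrable s hs gf
  have hGcomp : Integrable (fun ξ : Eu n =>
      Cst * (‖R⁻¹ • ξ‖ ^ (2 * s) * ‖𝓕 ⇑f (R⁻¹ • ξ)‖ ^ 2)) := by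
    apply Integrable.const_mul
    exact hGint.comp_smul (inv_ne_zero hR.ne')
  have hpt : ∀ ξ : Eu n, ‖ξ‖ ^ (2 * s) * ‖𝓕 (S0 n τ ⇑f) ξ‖ ^ 2
      ≤ Cst * (‖R⁻¹ • ξ‖ ^ (2 * s) * ‖𝓕 ⇑f (R⁻¹ • ξ)‖ ^ 2) := by
    intro ξ
    have hnsm : ‖R⁻¹ • ξ‖ = R⁻¹ * ‖ξ‖ := by
      rw [norm_smul, Real.norm_eq_abs, abs_of_pos (inv_pos.mpr hR)]
    have hw : ‖ξ‖ ^ (2 * s) = R ^ (2 * s) * ‖R⁻¹ • ξ‖ ^ (2 * s) := by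
      rw [hnsm, Real.mul_rpow (by positivity) (norm_nonneg _), Real.inv_rpow hR.le, ← mul_assoc,
        mul_inv_cancel₀ (by positivity), one_mul]
    have hsq : ‖𝓕 (S0 n τ ⇑f) ξ‖ ^ 2
        ≤ (R * (R ^ n)⁻¹) ^ 2 * ‖𝓕 ⇑f (R⁻¹ • ξ)‖ ^ 2 := by
      rw [← mul_pow]
      exact pow_le_pow_left₀ (norm_nonneg _) (hFnorm ξ) 2
    calc ‖ξ‖ ^ (2 * s) * ‖𝓕 (S0 n τ ⇑f) ξ‖ ^ 2
        ≤ ‖ξ‖ ^ (2 * s) * ((R * (R ^ n)⁻¹) ^ 2 * ‖𝓕 ⇑f (R⁻¹ • ξ)‖ ^ 2) :=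
          mul_le_mul_of_nonneg_left hsq (Real.rpow_nonneg (norm_nonneg _) _)
      _ = Cst * (‖R⁻¹ • ξ‖ ^ (2 * s) * ‖𝓕 ⇑f (R⁻¹ • ξ)‖ ^ 2) := by
          rw [hw, hCst]; ring
  have hA : (∫ ξ : Eu n, ‖ξ‖ ^ (2 * s) * ‖𝓕 (S0 n τ ⇑f) ξ‖ ^ 2)
      ≤ Cst * (R ^ n * ∫ η : Eu n, ‖η‖ ^ (2 * s) * ‖𝓕 ⇑f η‖ ^ 2) := by
    calc (∫ ξ : Eu n, ‖ξ‖ ^ (2 * s) * ‖𝓕 (S0 n τ ⇑f) ξ‖ ^ 2)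
        ≤ ∫ ξ : Eu n, Cst * (‖R⁻¹ • ξ‖ ^ (2 * s) * ‖𝓕 ⇑f (R⁻¹ • ξ)‖ ^ 2) := by
          apply integral_mono_of_nonneg ?_ hGcomp (Filter.Eventually.of_forall hpt)
          filter_upwards with ξ
          positivity
      _ = Cst * ∫ ξ : Eu n, (fun η : Eu n => ‖η‖ ^ (2 * s) * ‖𝓕 ⇑f η‖ ^ 2)
            (R⁻¹ • ξ) := by rw [integral_const_mul]
      _ = Cst * (R ^ n * ∫ η : Eu n, ‖η‖ ^ (2 * s) * ‖𝓕 ⇑f η‖ ^ 2) := by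
          rw [MeasureTheory.Measure.integral_comp_inv_smul volume
            (fun η : Eu n => ‖η‖ ^ (2 * s) * ‖𝓕 ⇑f η‖ ^ 2) R]
          rw [finrank_euclideanSpace, Fintype.card_fin, smul_eq_mul,
            abs_of_pos (by positivity : (0:ℝ) < R ^ n)]
  have e1 : R ^ n = Real.exp ((n : ℝ) * (-τ / 2)) := by
    rw [hRdef, ← Real.exp_nat_mul]
  have e2 : R ^ (2 * s) = Real.exp ((-τ / 2) * (2 * s)) := by
    rw [hRdef, Real.rpow_def_of_pos (Real.exp_pos _), Real.log_exp]
  have hKey : Cst * R ^ n = Real.exp (((n : ℝ) / 2 - 1 - s) * τ) := by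
    rw [hCst, e1, e2, hRdef, ← Real.exp_neg, ← Real.exp_add, sq, ← Real.exp_add, ← Real.exp_add,
      ← Real.exp_add]
    congr 1
    ring
  have hBnn : 0 ≤ ∫ η : Eu n, ‖η‖ ^ (2 * s) * ‖𝓕 ⇑f η‖ ^ 2 :=
    integral_nonneg fun η => by positivity
  have hAnn : 0 ≤ ∫ ξ : Eu n, ‖ξ‖ ^ (2 * s) * ‖𝓕 (S0 n τ ⇑f) ξ‖ ^ 2 :=
    integral_nonneg fun ξ => by positivity
  simp only [hnorm]
  calc (∫ ξ : Eu n, ‖ξ‖ ^ (2 * s) * ‖𝓕 (S0 n τ ⇑f) ξ‖ ^ 2) ^ ((1:ℝ)/2)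
      ≤ (Real.exp (((n : ℝ) / 2 - 1 - s) * τ) *
          ∫ η : Eu n, ‖η‖ ^ (2 * s) * ‖𝓕 ⇑f η‖ ^ 2) ^ ((1:ℝ)/2) := by
        apply Real.rpow_le_rpow hAnn _ (by norm_num)
        calc _ ≤ Cst * (R ^ n * ∫ η : Eu n, ‖η‖ ^ (2 * s) * ‖𝓕 ⇑f η‖ ^ 2) := hA
          _ = _ := by rw [← mul_assoc, hKey]
    _ = (Real.exp (((n : ℝ) / 2 - 1 - s) * τ)) ^ ((1:ℝ)/2) *
          (∫ η : Eu n, ‖η‖ ^ (2 * s) * ‖𝓕 ⇑f η‖ ^ 2) ^ ((1:ℝ)/2) :=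
        Real.mul_rpow (Real.exp_pos _).le hBnn
    _ = Real.exp ((1 / 2) * ((n : ℝ) / 2 - 1 - s) * τ) *
          (∫ η : Eu n, ‖η‖ ^ (2 * s) * ‖𝓕 ⇑f η‖ ^ 2) ^ ((1:ℝ)/2) := by
        rw [Real.rpow_def_of_pos (Real.exp_pos _), Real.log_exp]
        congr 2
        ring
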